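/- Let $x^\dagger\in\ell^1\setminus\ell^0$ (i.e., $x^\dagger$ has infinitely many nonzero components) and let $\eta>0$. If $\xi\in\partial\mathcal{R}_\eta(x^\dagger)\subset\ell^\infty$ is any subgradient of $\mathcal{R}_\eta(x)=\eta\|x\|_{\ell^1}+\tfrac12\|x\|_{\ell^2}^2$ at $x^\dagger$, then $\xi\notin c_0$; in particular, $\xi$ cannot lie in the range of $A^*$ for any bounded linear $A:\ell^2\to Y$. -/

import Mathlib

open Filter Topology

noncomputable section

/-- Key: any `Memℓp f p` with `0 < p.toReal` tends to 0. -/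
private lemma tendsto_zero_of_memℓp {f : ℕ → ℝ} {p : ENNReal} (hp : 0 < p.toReal)
    (hf : Memℓp f p) : Tendsto f atTop (nhds 0) := by
  have hs := hf.summable hp
  have h0 := hs.tendsto_atTop_zero
  have : Tendsto (fun k => ‖f k‖) atTop (nhds 0) := by
    have hpow : Tendsto (fun k => (‖f k‖ ^ p.toReal) ^ (1 / p.toReal)) atTop (nhds 0) := by
      have := h0.rpow_const (p := 1 / p.toReal) (Or.inr (by positivity))
      simpa [Real.zero_rpow (show p.toReal⁻¹ ≠ 0 by positivity)] using this
    refine hpow.congr fun k => ?_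
    rw [← Real.rpow_mul (norm_nonneg _), mul_one_div, div_self hp.ne', Real.rpow_one]
  simpa using tendsto_zero_iff_norm_tendsto_zero.2 this

/-- Let `x† ∈ ℓ¹ \ ℓ⁰` (infinitely many nonzero components) and `η > 0`.
Any subgradient `ξ ∈ ∂R_η(x†)` of `R_η(x) = η‖x‖₁ + ½‖x‖₂²`, i.e. any sequence of the
form `ξ_k = η ζ_k + x†_k` with `ζ_k = sgn(x†_k)` when `x†_k ≠ 0` and `ζ_k ∈ [-1,1]`
otherwise, does not belong to `c₀`; in particular it is not of the form `A* v` for any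
bounded linear `A : ℓ² → Y` into a Hilbert space `Y` and `v ∈ Y`. -/
theorem subgradient_elastic_net_not_in_c0
    (x : ℕ → ℝ) (hx1 : Memℓp x 1) (hx0 : {k : ℕ | x k ≠ 0}.Infinite)
    (η : ℝ) (hη : 0 < η) (ξ ζ : ℕ → ℝ)
    (hζ : ∀ k, (0 < x k → ζ k = 1) ∧ (x k < 0 → ζ k = -1) ∧ ζ k ∈ Set.Icc (-1 : ℝ) 1)
    (hξ : ∀ k, ξ k = η * ζ k + x k) :
    ¬ Tendsto ξ atTop (nhds 0) ∧
      ∀ (Y : Type) (_ : NormedAddCommGroup Y) (_ : InnerProductSpace ℝ Y)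
        (_ : CompleteSpace Y) (A : lp (fun _ : ℕ => ℝ) 2 →L[ℝ] Y) (v : Y),
        ξ ≠ (ContinuousLinearMap.adjoint A v : ∀ _ : ℕ, ℝ) := by
  have hxz : Tendsto x atTop (nhds 0) := tendsto_zero_of_memℓp (by norm_num) hx1
  have hmain : ¬ Tendsto ξ atTop (nhds 0) := by
    intro h
    have hζz : Tendsto ζ atTop (nhds 0) := by
      have : Tendsto (fun k => (ξ k - x k) / η) atTop (nhds ((0 - 0) / η)) :=
        (h.sub hxz).div_const η
      simp only [sub_zero, zero_div] at this
      refine this.congr fun k => ?_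
      rw [hξ k]; field_simp; ring
    have h12 : ∀ᶠ k in atTop, |ζ k| < 1 := by
      have := hζz.abs
      simpa using this.eventually (eventually_lt_nhds (show |(0:ℝ)| < 1 by norm_num))
    obtain ⟨N, hN⟩ := eventually_atTop.1 h12
    obtain ⟨k, hk1, hk2⟩ := hx0.exists_gt N
    have habs : |ζ k| = 1 := by
      rcases lt_or_gt_of_ne (Ne.symm (hk1 : x k ≠ 0)).symm with hlt | hgt
      · rw [(hζ k).2.1 hlt]; norm_num
      · rw [(hζ k).1 hgt]; norm_num
    have := hN k hk2.le
    rw [habs] at this; exact lt_irrefl _ this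
  refine ⟨hmain, ?_⟩
  intro Y _ _ _ A v heq
  apply hmain
  rw [heq]
  exact tendsto_zero_of_memℓp (by norm_num) (ContinuousLinearMap.adjoint A v).2
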